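/- Let K ≥ 2, a > 0, b ≥ 0, M ≥ 0 be reals with b(K−1) < 2a, and let α₀, β₀, α₁, (y_t)_{t=2}^{K}, (z_t)_{t=1}^{K} be nonnegative reals satisfying α₀ + α₁ + Σ_{t=2}^{K} y_t = aK, β₀ + Σ_{t=1}^{K} z_t = bK, and α₁ + Σ_{t=2}^{K} t·y_t + Σ_{t=1}^{K} t·z_t ≤ KM. Then ((2aK + b(K−1))/(2(a+b)aK))·α₀ + ((K+1)/(2(a+b)K))·β₀ + ((K−1)/(2aK))·α₁ ≥ K − (K+1)·M/(2(a+b)). -/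

import Mathlib

/-- Linear-programming step of the converse proof (small-memory regime,
`b(K−1) < 2a`): lower bound on the weighted combination of `α₀, β₀, α₁`. -/
theorem stmt_14 (K : ℕ) (hK : 2 ≤ K) (a b M α₀ β₀ α₁ : ℝ)
    (ha : 0 < a) (hb : 0 ≤ b) (hM : 0 ≤ M)
    (hreg : b * ((K : ℝ) - 1) < 2 * a)
    (hα₀ : 0 ≤ α₀) (hβ₀ : 0 ≤ β₀) (hα₁ : 0 ≤ α₁)
    (y z : ℕ → ℝ)
    (hy : ∀ t ∈ Finset.Icc 2 K, 0 ≤ y t)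
    (hz : ∀ t ∈ Finset.Icc 1 K, 0 ≤ z t)
    (h1 : α₀ + α₁ + ∑ t ∈ Finset.Icc 2 K, y t = a * K)
    (h2 : β₀ + ∑ t ∈ Finset.Icc 1 K, z t = b * K)
    (h3 : α₁ + ∑ t ∈ Finset.Icc 2 K, (t : ℝ) * y t + ∑ t ∈ Finset.Icc 1 K, (t : ℝ) * z t
            ≤ K * M) :
    ((2 * a * K + b * ((K : ℝ) - 1)) / (2 * (a + b) * a * K)) * α₀
        + (((K : ℝ) + 1) / (2 * (a + b) * K)) * β₀
        + (((K : ℝ) - 1) / (2 * a * K)) * α₁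
      ≥ (K : ℝ) - ((K : ℝ) + 1) * M / (2 * (a + b)) := by
  have hK2 : (2:ℝ) ≤ (K:ℝ) := by exact_mod_cast hK
  have hKpos : (0:ℝ) < (K:ℝ) := by linarith
  have hab : (0:ℝ) < a + b := by linarith
  set S1 := ∑ t ∈ Finset.Icc 2 K, y t with hS1def
  set S2 := ∑ t ∈ Finset.Icc 1 K, z t with hS2def
  set T1 := ∑ t ∈ Finset.Icc 2 K, (t : ℝ) * y t with hT1def
  set T2 := ∑ t ∈ Finset.Icc 1 K, (t : ℝ) * z t with hT2def
  have hS1 : 0 ≤ S1 := Finset.sum_nonneg hy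
  have hS2 : 0 ≤ S2 := Finset.sum_nonneg hz
  have hF1 : 2 * S1 ≤ T1 := by
    rw [hS1def, hT1def, Finset.mul_sum]
    refine Finset.sum_le_sum fun t ht => ?_
    have ht2 : (2:ℝ) ≤ (t:ℝ) := by
      have := (Finset.mem_Icc.mp ht).1; exact_mod_cast this
    exact mul_le_mul_of_nonneg_right ht2 (hy t ht)
  have hF2 : S2 ≤ T2 := by
    rw [hS2def, hT2def]
    refine Finset.sum_le_sum fun t ht => ?_
    have ht1 : (1:ℝ) ≤ (t:ℝ) := by
      have := (Finset.mem_Icc.mp ht).1; exact_mod_cast this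
    nlinarith [hz t ht]
  -- polynomial key inequality (goal multiplied by 2(a+b)aK > 0)
  have e1 : (2*a*(K:ℝ) + b*((K:ℝ)-1)) * (α₀ + α₁ + S1)
      = (2*a*(K:ℝ) + b*((K:ℝ)-1)) * (a*(K:ℝ)) := by rw [h1]
  have e2 : (a*((K:ℝ)+1)) * (β₀ + S2) = (a*((K:ℝ)+1)) * (b*(K:ℝ)) := by rw [h2]
  have e3 : (a*((K:ℝ)+1)) * (α₁ + T1 + T2) ≤ (a*((K:ℝ)+1)) * ((K:ℝ)*M) := by
    apply mul_le_mul_of_nonneg_left h3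
    positivity
  have h6 : 0 ≤ (2*a - b*((K:ℝ)-1)) * S1 := by
    apply mul_nonneg (by linarith) hS1
  have h4 : 0 ≤ a*((K:ℝ)+1) * (T1 - 2*S1) := by
    apply mul_nonneg (by positivity) (by linarith)
  have h5 : 0 ≤ a*((K:ℝ)+1) * (T2 - S2) := by
    apply mul_nonneg (by positivity) (by linarith)
  have key : 2*(a+b)*a*(K:ℝ)*(K:ℝ) - a*(K:ℝ)*((K:ℝ)+1)*M
      ≤ (2*a*(K:ℝ) + b*((K:ℝ)-1))*α₀ + a*((K:ℝ)+1)*β₀ + (a+b)*((K:ℝ)-1)*α₁ := by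
    nlinarith [e1, e2, e3, h4, h5, h6]
  rw [ge_iff_le, ← sub_nonneg]
  have hrewrite :
      ((2 * a * K + b * ((K : ℝ) - 1)) / (2 * (a + b) * a * K)) * α₀
        + (((K : ℝ) + 1) / (2 * (a + b) * K)) * β₀
        + (((K : ℝ) - 1) / (2 * a * K)) * α₁
        - ((K : ℝ) - ((K : ℝ) + 1) * M / (2 * (a + b)))
      = ((2*a*(K:ℝ) + b*((K:ℝ)-1))*α₀ + a*((K:ℝ)+1)*β₀ + (a+b)*((K:ℝ)-1)*α₁
          - (2*(a+b)*a*(K:ℝ)*(K:ℝ) - a*(K:ℝ)*((K:ℝ)+1)*M)) / (2*(a+b)*a*(K:ℝ)) := by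
    field_simp
  rw [hrewrite]
  apply div_nonneg (by linarith) (by positivity)
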